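/- Let p = 3, let Φ : F_3^ℤ → F_3^ℤ be the cellular automaton with generating polynomial φ(x) = x + 1, let θ be a primitive bijective length-3 substitution on F_3, and let u ∈ F_3^ℤ be a bi-infinite fixed point of θ. Then for each k ≥ 1, each n ≥ 0, and each m ∈ ℤ: Φ^{n·3^k}(u)|_{[m·3^k, (m+1)·3^k − 1]} lies in {θ^k(0), θ^k(1), θ^k(2)} if n is even and in {2θ^k(0), 2θ^k(1), 2θ^k(2)} if n is odd. -/

import Mathlib

/-- Extension of a substitution `θ` to words, by concatenation. -/
def wordSub (θ : ZMod 3 → List (ZMod 3)) : List (ZMod 3) → List (ZMod 3)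
  | [] => []
  | a :: w => θ a ++ wordSub θ w

theorem ws_len (θ : ZMod 3 → List (ZMod 3)) (hlen : ∀ a, (θ a).length = 3) :
    ∀ w, (wordSub θ w).length = 3 * w.length
  | [] => rfl
  | a :: w => by simp [wordSub, hlen, ws_len θ hlen w]; ring

theorem ws_iter_len (θ : ZMod 3 → List (ZMod 3)) (hlen : ∀ a, (θ a).length = 3)
    (k : ℕ) (w : List (ZMod 3)) :
    ((wordSub θ)^[k] w).length = 3 ^ k * w.length := by
  induction k generalizing w with
  | zero => simp
  | succ k ih => rw [Function.iterate_succ_apply', ws_len θ hlen, ih]; ring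

theorem ws_getD (θ : ZMod 3 → List (ZMod 3)) (hlen : ∀ a, (θ a).length = 3) :
    ∀ (w : List (ZMod 3)) (q r : ℕ), q < w.length → r < 3 →
    (wordSub θ w).getD (3 * q + r) 0 = (θ (w.getD q 0)).getD r 0
  | [], q, r, hq, hr => by simp at hq
  | a :: w, 0, r, hq, hr => by
      show (θ a ++ wordSub θ w).getD (3 * 0 + r) 0 = _
      rw [Nat.mul_zero, Nat.zero_add, List.getD_append _ _ _ _ (by rw [hlen]; exact hr)]
      rfl
  | a :: w, q + 1, r, hq, hr => by
      show (θ a ++ wordSub θ w).getD _ 0 = _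
      have h1 : 3 * (q + 1) + r = (θ a).length + (3 * q + r) := by rw [hlen]; ring
      rw [h1, List.getD_append_right _ _ _ _ (Nat.le_add_right _ _)]
      simp only [Nat.add_sub_cancel_left]
      exact ws_getD θ hlen w q r (by simpa using hq) hr

/-- getD of the (k+1)-iterate in terms of the k-iterate. -/
theorem ws_iter_getD (θ : ZMod 3 → List (ZMod 3)) (hlen : ∀ a, (θ a).length = 3)
    (k : ℕ) (a : ZMod 3) (q r : ℕ) (hq : q < 3 ^ k) (hr : r < 3) :
    ((wordSub θ)^[k + 1] [a]).getD (3 * q + r) 0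
      = (θ (((wordSub θ)^[k] [a]).getD q 0)).getD r 0 := by
  rw [Function.iterate_succ_apply']
  exact ws_getD θ hlen _ q r (by rw [ws_iter_len θ hlen]; simpa using hq) hr

theorem col_bij (θ : ZMod 3 → List (ZMod 3)) (hlen : ∀ a, (θ a).length = 3)
    (hbij : ∀ t : ℕ, t < 3 → Function.Bijective (fun a : ZMod 3 => (θ a).getD t 0)) :
    ∀ k t, t < 3 ^ k → Function.Bijective (fun a : ZMod 3 => ((wordSub θ)^[k] [a]).getD t 0) := by
  intro k
  induction k with
  | zero =>
    intro t ht
    interval_cases t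
    exact Function.bijective_id
  | succ k ih =>
    intro t ht
    have hd : t = 3 * (t / 3) + t % 3 := (Nat.div_add_mod t 3).symm ▸ by omega
    have hq : t / 3 < 3 ^ k := by
      have : t < 3 * 3 ^ k := by rw [pow_succ] at ht; omega
      omega
    have hr : t % 3 < 3 := Nat.mod_lt _ (by norm_num)
    have heq : (fun a : ZMod 3 => ((wordSub θ)^[k + 1] [a]).getD t 0)
        = fun a : ZMod 3 => (θ (((wordSub θ)^[k] [a]).getD (t / 3) 0)).getD (t % 3) 0 := by
      funext a
      conv_lhs => rw [hd]
      exact ws_iter_getD θ hlen k a _ _ hq hr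
    rw [heq]
    exact (hbij _ hr).comp (ih _ hq)

theorem bij_sum (f : ZMod 3 → ZMod 3) (hf : Function.Bijective f) :
    f 0 + f 1 + f 2 = 0 := by
  have h1 : ∑ a : ZMod 3, f a = ∑ b : ZMod 3, b :=
    Fintype.sum_bijective f hf _ id (fun a => rfl)
  have h2 : ∑ a : ZMod 3, f a = f 0 + f 1 + f 2 := by
    exact Fin.sum_univ_three f
  have h3 : ∑ b : ZMod 3, b = 0 := by decide
  rw [← h2, h1, h3]

theorem key3 (x : ZMod 3 → ZMod 3) (hx : x 0 + x 1 + x 2 = 0) (a b : ZMod 3) :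
    x a + x b = 2 * x (-(a + b)) := by
  have hz : ∀ c : ZMod 3, (3 : ZMod 3) * x c = 0 := by
    intro c; rw [show (3 : ZMod 3) = 0 by decide, zero_mul]
  have h3 : ∀ c : ZMod 3, c = 0 ∨ c = 1 ∨ c = 2 := by decide
  rcases h3 a with rfl | rfl | rfl <;> rcases h3 b with rfl | rfl | rfl <;>
    reduce_mod_char <;>
    first
      | ring1
      | linear_combination hx - hz 0
      | linear_combination hx - hz 1
      | linear_combination hx - hz 2

theorem ublock (θ : ZMod 3 → List (ZMod 3)) (hlen : ∀ a, (θ a).length = 3)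
    (u : ℤ → ZMod 3)
    (hfix : ∀ (m : ℤ) (t : ℕ), t < 3 → u (3 * m + (t : ℤ)) = (θ (u m)).getD t 0) :
    ∀ (k : ℕ) (m : ℤ) (t : ℕ), t < 3 ^ k →
      u ((3:ℤ) ^ k * m + (t : ℤ)) = ((wordSub θ)^[k] [u m]).getD t 0 := by
  intro k
  induction k with
  | zero =>
    intro m t ht
    interval_cases t
    simp
  | succ k ih =>
    intro m t ht
    obtain ⟨q, r, hq, hr, rfl⟩ : ∃ q r, q < 3 ^ k ∧ r < 3 ∧ t = 3 * q + r := by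
      refine ⟨t / 3, t % 3, ?_, Nat.mod_lt _ (by norm_num), (Nat.div_add_mod t 3).symm ▸ by omega⟩
      have : t < 3 * 3 ^ k := by rw [pow_succ] at ht; omega
      omega
    rw [ws_iter_getD θ hlen k _ q r hq hr]
    have harg : (3:ℤ) ^ (k + 1) * m + ((3 * q + r : ℕ) : ℤ)
        = 3 * ((3:ℤ) ^ k * m + (q : ℤ)) + (r : ℤ) := by push_cast; ring
    rw [harg, hfix _ r hr, ih m q hq]

theorem phi_pow (Φ : (ℤ → ZMod 3) → (ℤ → ZMod 3))
    (hΦ : ∀ (v : ℤ → ZMod 3) (m : ℤ), Φ v m = v (m - 1) + v m) :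
    ∀ (k : ℕ) (v : ℤ → ZMod 3) (m : ℤ), (Φ^[3 ^ k] v) m = v (m - (3:ℤ) ^ k) + v m := by
  intro k
  induction k with
  | zero => intro v m; simpa using hΦ v m
  | succ k ih =>
    intro v m
    have e1 : (Φ^[3 ^ (k + 1)]) v m = (Φ^[3 ^ k] (Φ^[3 ^ k] (Φ^[3 ^ k] v))) m := by
      rw [show 3 ^ (k + 1) = 3 ^ k + (3 ^ k + 3 ^ k) by ring,
        Function.iterate_add_apply, Function.iterate_add_apply]
    rw [e1]
    simp only [ih]
    have harg : m - (3:ℤ) ^ (k + 1) = m - 3 ^ k - 3 ^ k - 3 ^ k := by ring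
    rw [harg]
    have hc : ∀ c : ZMod 3, c + c + c = 0 := by decide
    linear_combination hc (v (m - (3:ℤ) ^ k - 3 ^ k)) + hc (v (m - (3:ℤ) ^ k))

/-- Let `Φ : F_3^ℤ → F_3^ℤ` be the cellular automaton with generating polynomial
`φ(x) = x + 1`, i.e. `(Φ v)_m = v_{m-1} + v_m`.  Let `θ` be a primitive bijective
length-3 substitution on `F_3` and let `u ∈ F_3^ℤ` be a bi-infinite fixed point of `θ`.
Then for each `k ≥ 1`, `n ≥ 0` and `m ∈ ℤ`, the block
`Φ^{n·3^k}(u)|_{[m·3^k, (m+1)·3^k - 1]}` lies in `{θ^k(0), θ^k(1), θ^k(2)}` if `n` is even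
and in `{2θ^k(0), 2θ^k(1), 2θ^k(2)}` if `n` is odd. -/
theorem ledrappier_blocks (θ : ZMod 3 → List (ZMod 3))
    (hlen : ∀ a, (θ a).length = 3)
    (hbij : ∀ t : ℕ, t < 3 → Function.Bijective (fun a : ZMod 3 => (θ a).getD t 0))
    (hprim : ∃ K : ℕ, 1 ≤ K ∧ ∀ a b : ZMod 3, b ∈ (wordSub θ)^[K] [a])
    (u : ℤ → ZMod 3)
    (hfix : ∀ (m : ℤ) (t : ℕ), t < 3 → u (3 * m + (t : ℤ)) = (θ (u m)).getD t 0)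
    (Φ : (ℤ → ZMod 3) → (ℤ → ZMod 3))
    (hΦ : ∀ (v : ℤ → ZMod 3) (m : ℤ), Φ v m = v (m - 1) + v m) :
    ∀ (k n : ℕ), 1 ≤ k → ∀ m : ℤ, ∃ a : ZMod 3,
      ∀ t : ℕ, t < 3 ^ k →
        (Φ^[n * 3 ^ k] u) (m * 3 ^ k + (t : ℤ))
          = (if Even n then 1 else 2) * ((wordSub θ)^[k] [a]).getD t 0 := by
  intro k n hk
  induction n with
  | zero =>
    intro m
    refine ⟨u m, fun t ht => ?_⟩
    simp only [Nat.zero_mul, Function.iterate_zero, id_eq, if_pos (show Even 0 by exact ⟨0, rfl⟩), one_mul]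
    rw [mul_comm]
    exact ublock θ hlen u hfix k m t ht
  | succ n ih =>
    intro m
    obtain ⟨a, ha⟩ := ih m
    obtain ⟨b, hb⟩ := ih (m - 1)
    refine ⟨-(a + b), fun t ht => ?_⟩
    have harg : m * (3:ℤ) ^ k + (t : ℤ) - 3 ^ k = (m - 1) * 3 ^ k + (t : ℤ) := by ring
    have hstep : (Φ^[(n + 1) * 3 ^ k] u) (m * 3 ^ k + (t : ℤ))
        = (Φ^[n * 3 ^ k] u) ((m - 1) * 3 ^ k + (t : ℤ))
          + (Φ^[n * 3 ^ k] u) (m * 3 ^ k + (t : ℤ)) := by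
      rw [show (n + 1) * 3 ^ k = 3 ^ k + n * 3 ^ k by ring,
        Function.iterate_add_apply, phi_pow Φ hΦ k, harg]
    rw [hstep, hb t ht, ha t ht]
    have hsum := bij_sum _ (col_bij θ hlen hbij k t ht)
    have hkey := key3 (fun c : ZMod 3 => ((wordSub θ)^[k] [c]).getD t 0) hsum a b
    have hc : ∀ c : ZMod 3, c + c + c = 0 := by decide
    rcases Nat.even_or_odd n with he | ho
    · rw [if_pos he, if_neg (by simp [Nat.even_add_one, he])]
      rw [one_mul, one_mul]
      linear_combination hkey
    · rw [if_neg (by simpa using ho), if_pos (Nat.even_add_one.mpr (Nat.not_even_iff_odd.mpr ho))]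
      rw [one_mul]
      linear_combination 2 * hkey + hc (((wordSub θ)^[k] [-(a + b)]).getD t 0)
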